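/- Under the 4NAT test distribution, the marginal distribution of y is uniform on (ZMod 3)^L, and y is independent of x; the same holds for z and for w. -/

import Mathlib

open Finset

/-- The 4-Not-All-There predicate: some element of `ZMod 3` does not occur
among the four inputs. -/
def fourNAT (a : Fin 4 → ZMod 3) : Prop := ∃ c : ZMod 3, ∀ i, a i ≠ c

/-- The TwoPair predicate: the four inputs take exactly two distinct values,
each occurring exactly twice. -/
def TwoPair (a : Fin 4 → ZMod 3) : Prop :=
  ∃ b c : ZMod 3, b ≠ c ∧
    (univ.filter fun i => a i = b).card = 2 ∧
    (univ.filter fun i => a i = c).card = 2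

-- Probability of an event `E x y z w` under the 4NAT test distribution with
-- parameters `d`, `K` (coordinates `j ∈ [L]`, `L = dK`, are encoded as pairs
-- `(i, j') ∈ Fin K × Fin d` with block `π(j) = i`): `x` is uniform on
-- `(ZMod 3)^K` and, independently for each coordinate `j`, `(y_j, z_j, w_j)`
-- is uniform on the 6 triples with `TwoPair (x_{π(j)}, y_j, z_j, w_j)`.
open Classical in
noncomputable def natTestPr (d K : ℕ)
    (E : (Fin K → ZMod 3) → ((Fin K × Fin d) → ZMod 3) →
         ((Fin K × Fin d) → ZMod 3) → ((Fin K × Fin d) → ZMod 3) → Prop) : ℝ :=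
  (∑ x : Fin K → ZMod 3, ∑ y : (Fin K × Fin d) → ZMod 3,
    ∑ z : (Fin K × Fin d) → ZMod 3, ∑ w : (Fin K × Fin d) → ZMod 3,
      (if (∀ j : Fin K × Fin d, TwoPair ![x j.1, y j, z j, w j]) ∧ E x y z w
       then 1 else 0))
    / (3 ^ K * 6 ^ (d * K))


instance (a : Fin 4 → ZMod 3) : Decidable (TwoPair a) := by unfold TwoPair; infer_instance

open Classical in
noncomputable def ind (p : Prop) : ℝ := if p then 1 else 0

lemma ind_eq (p : Prop) [Decidable p] : (if p then (1:ℝ) else 0) = ind p := by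
  unfold ind; split_ifs <;> rfl

lemma ind_of {p : Prop} (h : p) : ind p = 1 := by simp [ind, h]
lemma ind_of_not {p : Prop} (h : ¬ p) : ind p = 0 := by simp [ind, h]
lemma ind_congr {p q : Prop} (h : p ↔ q) : ind p = ind q := by
  by_cases hp : p
  · rw [ind_of hp, ind_of (h.1 hp)]
  · rw [ind_of_not hp, ind_of_not (fun hq => hp (h.2 hq))]

lemma ind_forall {J : Type*} [Fintype J] (P : J → Prop) :
    ind (∀ j, P j) = ∏ j, ind (P j) := by
  by_cases h : ∀ j, P j
  · rw [ind_of h, eq_comm]; exact Finset.prod_eq_one fun j _ => ind_of (h j)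
  · rw [ind_of_not h, eq_comm]
    push_neg at h
    obtain ⟨j, hj⟩ := h
    exact Finset.prod_eq_zero (mem_univ j) (ind_of_not hj)

lemma key {J : Type*} [Fintype J] [DecidableEq J] (Q : J → ZMod 3 → ZMod 3 → Prop)
    [∀ j a b, Decidable (Q j a b)]
    (h2 : ∀ j, ((univ : Finset (ZMod 3 × ZMod 3)).filter fun p => Q j p.1 p.2).card = 2) :
    (∑ u : J → ZMod 3, ∑ v : J → ZMod 3, ind (∀ j, Q j (u j) (v j)))
      = 2 ^ Fintype.card J := by
  classical
  have h1 : (∑ u : J → ZMod 3, ∑ v : J → ZMod 3, ind (∀ j, Q j (u j) (v j)))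
      = ∑ g : J → ZMod 3 × ZMod 3, ∏ j, ind (Q j (g j).1 (g j).2) := by
    rw [show (∑ u : J → ZMod 3, ∑ v : J → ZMod 3, ind (∀ j, Q j (u j) (v j)))
        = ∑ uv : (J → ZMod 3) × (J → ZMod 3), ind (∀ j, Q j (uv.1 j) (uv.2 j)) from
      (Fintype.sum_prod_type' (f := fun (u v : J → ZMod 3) =>
        ind (∀ j, Q j (u j) (v j)))).symm]
    rw [← Equiv.sum_comp (Equiv.arrowProdEquivProdArrow J (fun _ => ZMod 3) (fun _ => ZMod 3))
      (fun uv => ind (∀ j, Q j (uv.1 j) (uv.2 j)))]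
    exact Finset.sum_congr rfl fun g _ => by
      simp [Equiv.arrowProdEquivProdArrow, ind_forall]
  rw [h1]
  have h3 : (∑ g : J → ZMod 3 × ZMod 3, ∏ j, ind (Q j (g j).1 (g j).2))
      = ∏ j, ∑ p : ZMod 3 × ZMod 3, ind (Q j p.1 p.2) := by
    rw [← Fintype.piFinset_univ]
    exact (Finset.prod_univ_sum (fun _ => univ)
      (fun j (p : ZMod 3 × ZMod 3) => ind (Q j p.1 p.2))).symm
  rw [h3]
  have h4 : ∀ j : J, (∑ p : ZMod 3 × ZMod 3, ind (Q j p.1 p.2)) = 2 := by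
    intro j
    simp only [← ind_eq]
    rw [Finset.sum_boole, h2 j]
    norm_num
  rw [Finset.prod_congr rfl fun j _ => h4 j, Finset.prod_const, Finset.card_univ]

lemma cntY : ∀ a b : ZMod 3,
    ((univ : Finset (ZMod 3 × ZMod 3)).filter fun p => TwoPair ![a, b, p.1, p.2]).card = 2 := by
  decide

lemma cntZ : ∀ a b : ZMod 3,
    ((univ : Finset (ZMod 3 × ZMod 3)).filter fun p => TwoPair ![a, p.1, b, p.2]).card = 2 := by
  decide

lemma cntW : ∀ a b : ZMod 3,
    ((univ : Finset (ZMod 3 × ZMod 3)).filter fun p => TwoPair ![a, p.1, p.2, b]).card = 2 := by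
  decide

lemma card_fun_zmod (K : ℕ) : Fintype.card (Fin K → ZMod 3) = 3 ^ K := by
  simp [Fintype.card_fun]

lemma arith1 (d K : ℕ) :
    ((3:ℝ) ^ K * 2 ^ (K * d)) / (3 ^ K * 6 ^ (d * K)) = 1 / 3 ^ (d * K) := by
  have h6 : (6:ℝ) ^ (d * K) = 2 ^ (d * K) * 3 ^ (d * K) := by
    rw [← mul_pow]; norm_num
  rw [mul_comm K d, h6]
  have h2 : (2:ℝ) ^ (d * K) ≠ 0 := by positivity
  have h3 : (3:ℝ) ^ (d * K) ≠ 0 := by positivity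
  have h3' : (3:ℝ) ^ K ≠ 0 := by positivity
  field_simp

lemma arith2 (d K : ℕ) :
    ((2:ℝ) ^ (K * d)) / (3 ^ K * 6 ^ (d * K)) = (1 / 3 ^ K) * (1 / 3 ^ (d * K)) := by
  have h6 : (6:ℝ) ^ (d * K) = 2 ^ (d * K) * 3 ^ (d * K) := by
    rw [← mul_pow]; norm_num
  rw [mul_comm K d, h6]
  have h2 : (2:ℝ) ^ (d * K) ≠ 0 := by positivity
  have h3 : (3:ℝ) ^ (d * K) ≠ 0 := by positivity
  have h3' : (3:ℝ) ^ K ≠ 0 := by positivity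
  field_simp

set_option maxHeartbeats 1000000 in
theorem natTest_marginals (d K : ℕ) (hd : 0 < d) (hK : 0 < K)
    (x₀ : Fin K → ZMod 3) (y₀ z₀ w₀ : (Fin K × Fin d) → ZMod 3) :
    natTestPr d K (fun _x y _z _w => y = y₀) = 1 / 3 ^ (d * K) ∧
    natTestPr d K (fun x y _z _w => x = x₀ ∧ y = y₀)
      = (1 / 3 ^ K) * (1 / 3 ^ (d * K)) ∧
    natTestPr d K (fun _x _y z _w => z = z₀) = 1 / 3 ^ (d * K) ∧
    natTestPr d K (fun x _y z _w => x = x₀ ∧ z = z₀)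
      = (1 / 3 ^ K) * (1 / 3 ^ (d * K)) ∧
    natTestPr d K (fun _x _y _z w => w = w₀) = 1 / 3 ^ (d * K) ∧
    natTestPr d K (fun x _y _z w => x = x₀ ∧ w = w₀)
      = (1 / 3 ^ K) * (1 / 3 ^ (d * K)) := by
  classical
  have hcard : Fintype.card (Fin K × Fin d) = K * d := by simp
  -- the three "inner double sum" evaluations
  have keyY : ∀ (x : Fin K → ZMod 3) (b : (Fin K × Fin d) → ZMod 3),
      (∑ z : (Fin K × Fin d) → ZMod 3, ∑ w : (Fin K × Fin d) → ZMod 3,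
        ind (∀ j : Fin K × Fin d, TwoPair ![x j.1, b j, z j, w j])) = 2 ^ (K * d) := by
    intro x b
    have h := key (J := Fin K × Fin d) (fun j a c => TwoPair ![x j.1, b j, a, c])
      (fun j => cntY (x j.1) (b j))
    rw [hcard] at h
    exact h
  have keyZ : ∀ (x : Fin K → ZMod 3) (b : (Fin K × Fin d) → ZMod 3),
      (∑ y : (Fin K × Fin d) → ZMod 3, ∑ w : (Fin K × Fin d) → ZMod 3,
        ind (∀ j : Fin K × Fin d, TwoPair ![x j.1, y j, b j, w j])) = 2 ^ (K * d) := by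
    intro x b
    have h := key (J := Fin K × Fin d) (fun j a c => TwoPair ![x j.1, a, b j, c])
      (fun j => cntZ (x j.1) (b j))
    rw [hcard] at h
    exact h
  have keyW : ∀ (x : Fin K → ZMod 3) (b : (Fin K × Fin d) → ZMod 3),
      (∑ y : (Fin K × Fin d) → ZMod 3, ∑ z : (Fin K × Fin d) → ZMod 3,
        ind (∀ j : Fin K × Fin d, TwoPair ![x j.1, y j, z j, b j])) = 2 ^ (K * d) := by
    intro x b
    have h := key (J := Fin K × Fin d) (fun j a c => TwoPair ![x j.1, a, c, b j])
      (fun j => cntW (x j.1) (b j))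
    rw [hcard] at h
    exact h
  refine ⟨?_, ?_, ?_, ?_, ?_, ?_⟩
  · -- y marginal
    unfold natTestPr
    simp only [ind_eq]
    beta_reduce
    have hx : ∀ x : Fin K → ZMod 3,
        (∑ y : (Fin K × Fin d) → ZMod 3, ∑ z : (Fin K × Fin d) → ZMod 3,
          ∑ w : (Fin K × Fin d) → ZMod 3,
          ind ((∀ j : Fin K × Fin d, TwoPair ![x j.1, y j, z j, w j]) ∧ y = y₀))
        = 2 ^ (K * d) := by
      intro x
      rw [Finset.sum_eq_single y₀
        (fun b _ hb => Finset.sum_eq_zero fun z _ => Finset.sum_eq_zero fun w _ =>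
          ind_of_not fun h => hb h.2)
        (fun h => absurd (mem_univ y₀) h)]
      rw [Finset.sum_congr rfl fun z _ => Finset.sum_congr rfl fun w _ =>
        ind_congr (and_iff_left rfl)]
      exact keyY x y₀
    rw [Finset.sum_congr rfl fun x _ => hx x, Finset.sum_const, card_univ,
      card_fun_zmod, nsmul_eq_mul]
    push_cast
    exact arith1 d K
  · -- x,y joint
    unfold natTestPr
    simp only [ind_eq]
    beta_reduce
    rw [Finset.sum_eq_single x₀
      (fun b _ hb => Finset.sum_eq_zero fun y _ => Finset.sum_eq_zero fun z _ =>
        Finset.sum_eq_zero fun w _ => ind_of_not fun h => hb h.2.1)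
      (fun h => absurd (mem_univ x₀) h)]
    rw [Finset.sum_eq_single y₀
      (fun b _ hb => Finset.sum_eq_zero fun z _ => Finset.sum_eq_zero fun w _ =>
        ind_of_not fun h => hb h.2.2)
      (fun h => absurd (mem_univ y₀) h)]
    rw [Finset.sum_congr rfl fun z _ => Finset.sum_congr rfl fun w _ =>
      ind_congr (and_iff_left ⟨rfl, rfl⟩)]
    rw [keyY x₀ y₀]
    exact arith2 d K
  · -- z marginal
    unfold natTestPr
    simp only [ind_eq]
    beta_reduce
    have hxy : ∀ (x : Fin K → ZMod 3) (y : (Fin K × Fin d) → ZMod 3),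
        (∑ z : (Fin K × Fin d) → ZMod 3, ∑ w : (Fin K × Fin d) → ZMod 3,
          ind ((∀ j : Fin K × Fin d, TwoPair ![x j.1, y j, z j, w j]) ∧ z = z₀))
        = ∑ w : (Fin K × Fin d) → ZMod 3,
            ind (∀ j : Fin K × Fin d, TwoPair ![x j.1, y j, z₀ j, w j]) := by
      intro x y
      rw [Finset.sum_eq_single z₀
        (fun b _ hb => Finset.sum_eq_zero fun w _ => ind_of_not fun h => hb h.2)
        (fun h => absurd (mem_univ z₀) h)]
      exact Finset.sum_congr rfl fun w _ => ind_congr (by simp)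
    have hx : ∀ x : Fin K → ZMod 3,
        (∑ y : (Fin K × Fin d) → ZMod 3, ∑ z : (Fin K × Fin d) → ZMod 3,
          ∑ w : (Fin K × Fin d) → ZMod 3,
          ind ((∀ j : Fin K × Fin d, TwoPair ![x j.1, y j, z j, w j]) ∧ z = z₀))
        = 2 ^ (K * d) := by
      intro x
      rw [Finset.sum_congr rfl fun y _ => hxy x y]
      exact keyZ x z₀
    rw [Finset.sum_congr rfl fun x _ => hx x, Finset.sum_const, card_univ,
      card_fun_zmod, nsmul_eq_mul]
    push_cast
    exact arith1 d K
  · -- x,z joint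
    unfold natTestPr
    simp only [ind_eq]
    beta_reduce
    rw [Finset.sum_eq_single x₀
      (fun b _ hb => Finset.sum_eq_zero fun y _ => Finset.sum_eq_zero fun z _ =>
        Finset.sum_eq_zero fun w _ => ind_of_not fun h => hb h.2.1)
      (fun h => absurd (mem_univ x₀) h)]
    have hxy : ∀ y : (Fin K × Fin d) → ZMod 3,
        (∑ z : (Fin K × Fin d) → ZMod 3, ∑ w : (Fin K × Fin d) → ZMod 3,
          ind ((∀ j : Fin K × Fin d, TwoPair ![x₀ j.1, y j, z j, w j]) ∧ x₀ = x₀ ∧ z = z₀))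
        = ∑ w : (Fin K × Fin d) → ZMod 3,
            ind (∀ j : Fin K × Fin d, TwoPair ![x₀ j.1, y j, z₀ j, w j]) := by
      intro y
      rw [Finset.sum_eq_single z₀
        (fun b _ hb => Finset.sum_eq_zero fun w _ => ind_of_not fun h => hb h.2.2)
        (fun h => absurd (mem_univ z₀) h)]
      exact Finset.sum_congr rfl fun w _ => ind_congr (by simp)
    rw [Finset.sum_congr rfl fun y _ => hxy y]
    rw [keyZ x₀ z₀]
    exact arith2 d K
  · -- w marginal
    unfold natTestPr
    simp only [ind_eq]
    beta_reduce
    have hxyz : ∀ (x : Fin K → ZMod 3) (y z : (Fin K × Fin d) → ZMod 3),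
        (∑ w : (Fin K × Fin d) → ZMod 3,
          ind ((∀ j : Fin K × Fin d, TwoPair ![x j.1, y j, z j, w j]) ∧ w = w₀))
        = ind (∀ j : Fin K × Fin d, TwoPair ![x j.1, y j, z j, w₀ j]) := by
      intro x y z
      rw [Finset.sum_eq_single w₀
        (fun b _ hb => ind_of_not fun h => hb h.2)
        (fun h => absurd (mem_univ w₀) h)]
      exact ind_congr (by simp)
    have hx : ∀ x : Fin K → ZMod 3,
        (∑ y : (Fin K × Fin d) → ZMod 3, ∑ z : (Fin K × Fin d) → ZMod 3,
          ∑ w : (Fin K × Fin d) → ZMod 3,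
          ind ((∀ j : Fin K × Fin d, TwoPair ![x j.1, y j, z j, w j]) ∧ w = w₀))
        = 2 ^ (K * d) := by
      intro x
      rw [Finset.sum_congr rfl fun y _ => Finset.sum_congr rfl fun z _ => hxyz x y z]
      exact keyW x w₀
    rw [Finset.sum_congr rfl fun x _ => hx x, Finset.sum_const, card_univ,
      card_fun_zmod, nsmul_eq_mul]
    push_cast
    exact arith1 d K
  · -- x,w joint
    unfold natTestPr
    simp only [ind_eq]
    beta_reduce
    rw [Finset.sum_eq_single x₀
      (fun b _ hb => Finset.sum_eq_zero fun y _ => Finset.sum_eq_zero fun z _ =>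
        Finset.sum_eq_zero fun w _ => ind_of_not fun h => hb h.2.1)
      (fun h => absurd (mem_univ x₀) h)]
    have hxyz : ∀ (y z : (Fin K × Fin d) → ZMod 3),
        (∑ w : (Fin K × Fin d) → ZMod 3,
          ind ((∀ j : Fin K × Fin d, TwoPair ![x₀ j.1, y j, z j, w j]) ∧ x₀ = x₀ ∧ w = w₀))
        = ind (∀ j : Fin K × Fin d, TwoPair ![x₀ j.1, y j, z j, w₀ j]) := by
      intro y z
      rw [Finset.sum_eq_single w₀
        (fun b _ hb => ind_of_not fun h => hb h.2.2)
        (fun h => absurd (mem_univ w₀) h)]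
      exact ind_congr (by simp)
    rw [Finset.sum_congr rfl fun y _ => Finset.sum_congr rfl fun z _ => hxyz y z]
    rw [keyW x₀ w₀]
    exact arith2 d K
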